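/- For nonzero matrices X (N × P), Y (N × Q), define MMD²(X,Y) = ((1/N²)Σ_{i,j}⟨xᵢ,xⱼ⟩ − (1/N²)Σ_{i,j}⟨yᵢ,yⱼ⟩)² with xᵢ, yᵢ the rows of the Gram-normalized matrices X/√‖XXᵀ‖_F and Y/√‖YYᵀ‖_F. Then S(X,Y) ≤ 2 − N²·MMD²(X,Y), where S(X,Y) = ‖YᵀX‖_F²/(‖XᵀX‖_F‖YᵀY‖_F). Consequently MMD²(X,Y) ≤ (2 − S(X,Y))/N². -/

import Mathlib

open Matrix BigOperators

noncomputable def frob {m n : ℕ} (A : Matrix (Fin m) (Fin n) ℝ) : ℝ :=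
  Real.sqrt (∑ i, ∑ j, (A i j) ^ 2)

noncomputable def S {N P Q : ℕ} (X : Matrix (Fin N) (Fin P) ℝ)
    (Y : Matrix (Fin N) (Fin Q) ℝ) : ℝ :=
  (frob (Yᵀ * X)) ^ 2 / (frob (Xᵀ * X) * frob (Yᵀ * Y))

lemma frob_nonneg {m n : ℕ} (A : Matrix (Fin m) (Fin n) ℝ) : 0 ≤ frob A :=
  Real.sqrt_nonneg _

lemma frob_sq {m n : ℕ} (A : Matrix (Fin m) (Fin n) ℝ) :
    frob A ^ 2 = ∑ i, ∑ j, (A i j) ^ 2 := by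
  apply Real.sq_sqrt; positivity

lemma trace_form {m n : ℕ} (M N : Matrix (Fin m) (Fin n) ℝ) :
    Matrix.trace (M * Nᵀ) = ∑ i, ∑ j, M i j * N i j := by
  simp [Matrix.trace, Matrix.diag, Matrix.mul_apply]

lemma key_swap {N P Q : ℕ} (A : Matrix (Fin N) (Fin P) ℝ) (B : Matrix (Fin N) (Fin Q) ℝ) :
    ∑ i, ∑ j, (A * Aᵀ) i j * (B * Bᵀ) i j = ∑ q, ∑ p, ((Bᵀ * A) q p) ^ 2 := by
  have h1 : ∑ i, ∑ j, (A * Aᵀ) i j * (B * Bᵀ) i j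
      = Matrix.trace ((A * Aᵀ) * (B * Bᵀ)ᵀ) := (trace_form _ _).symm
  have h2 : ∑ q, ∑ p, ((Bᵀ * A) q p) ^ 2
      = Matrix.trace ((Bᵀ * A) * (Bᵀ * A)ᵀ) := by
    rw [trace_form]; simp [sq]
  rw [h1, h2]
  simp only [Matrix.transpose_mul, Matrix.transpose_transpose]
  rw [show Bᵀ * A * (Aᵀ * B) = Bᵀ * (A * Aᵀ * B) by
    rw [Matrix.mul_assoc, ← Matrix.mul_assoc A]]
  rw [Matrix.trace_mul_comm, Matrix.mul_assoc, Matrix.trace_mul_comm B, Matrix.mul_assoc]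

lemma frob_gram_pos {N P : ℕ} (X : Matrix (Fin N) (Fin P) ℝ) (hX : X ≠ 0) :
    0 < frob (X * Xᵀ) := by
  obtain ⟨i, p, h⟩ : ∃ i p, X i p ≠ 0 := by
    by_contra h; push_neg at h; exact hX (by ext i p; simp [h])
  have hdiag : 0 < (X * Xᵀ) i i := by
    rw [Matrix.mul_apply]
    refine Finset.sum_pos' (fun q _ => ?_) ⟨p, Finset.mem_univ p, ?_⟩
    · simp only [Matrix.transpose_apply]; exact mul_self_nonneg _
    · simp only [Matrix.transpose_apply]; exact mul_self_pos.mpr h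
  apply Real.sqrt_pos.mpr
  refine Finset.sum_pos' (fun i' _ => Finset.sum_nonneg fun j' _ => sq_nonneg _)
    ⟨i, Finset.mem_univ i, Finset.sum_pos' (fun j' _ => sq_nonneg _)
      ⟨i, Finset.mem_univ i, by positivity⟩⟩

lemma frob_gram_comm {N P : ℕ} (X : Matrix (Fin N) (Fin P) ℝ) :
    frob (Xᵀ * X) = frob (X * Xᵀ) := by
  have h := key_swap X X
  have h2 : frob (X * Xᵀ) ^ 2 = frob (Xᵀ * X) ^ 2 := by
    rw [frob_sq, frob_sq, ← h]
    exact Finset.sum_congr rfl fun i _ => Finset.sum_congr rfl fun j _ => sq _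
  calc frob (Xᵀ * X) = Real.sqrt (frob (Xᵀ * X) ^ 2) := (Real.sqrt_sq (frob_nonneg _)).symm
    _ = Real.sqrt (frob (X * Xᵀ) ^ 2) := by rw [h2]
    _ = frob (X * Xᵀ) := Real.sqrt_sq (frob_nonneg _)

theorem cka_bounds_mmd {N P Q : ℕ}
    (X : Matrix (Fin N) (Fin P) ℝ) (Y : Matrix (Fin N) (Fin Q) ℝ)
    (hX : X ≠ 0) (hY : Y ≠ 0)
    (x : Fin N → Fin P → ℝ) (y : Fin N → Fin Q → ℝ)
    (hx : ∀ i p, x i p = X i p / Real.sqrt (frob (X * Xᵀ)))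
    (hy : ∀ i q, y i q = Y i q / Real.sqrt (frob (Y * Yᵀ)))
    (MMD2 : ℝ)
    (hMMD : MMD2 =
      ((1 / (N : ℝ) ^ 2) * (∑ i, ∑ j, ∑ p, x i p * x j p) -
        (1 / (N : ℝ) ^ 2) * (∑ i, ∑ j, ∑ q, y i q * y j q)) ^ 2) :
    S X Y ≤ 2 - (N : ℝ) ^ 2 * MMD2 ∧
      MMD2 ≤ (2 - S X Y) / (N : ℝ) ^ 2 := by
  have hN : 0 < N := by
    rcases Nat.eq_zero_or_pos N with h | h
    · exfalso; apply hX; subst h; ext i j; exact i.elim0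
    · exact h
  have hN2 : (0:ℝ) < (N:ℝ)^2 := by positivity
  set cX := frob (X * Xᵀ) with hcXdef
  set cY := frob (Y * Yᵀ) with hcYdef
  have hcX : 0 < cX := frob_gram_pos X hX
  have hcY : 0 < cY := frob_gram_pos Y hY
  set a : Fin N → Fin N → ℝ := fun i j => (X * Xᵀ) i j / cX with ha
  set b : Fin N → Fin N → ℝ := fun i j => (Y * Yᵀ) i j / cY with hb
  have hax : ∀ i j, (∑ p, x i p * x j p) = a i j := by
    intro i j
    simp only [hx, ha, div_mul_div_comm, Real.mul_self_sqrt hcX.le, ← Finset.sum_div,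
      Matrix.mul_apply, Matrix.transpose_apply]
  have hay : ∀ i j, (∑ q, y i q * y j q) = b i j := by
    intro i j
    simp only [hy, hb, div_mul_div_comm, Real.mul_self_sqrt hcY.le, ← Finset.sum_div,
      Matrix.mul_apply, Matrix.transpose_apply]
  have hSX : ∑ i, ∑ j, (a i j)^2 = 1 := by
    have : ∑ i, ∑ j, (a i j)^2 = (∑ i, ∑ j, ((X * Xᵀ) i j)^2) / cX^2 := by
      simp only [ha, div_pow, Finset.sum_div]
    rw [this, ← frob_sq, ← hcXdef, div_self (by positivity)]
  have hSY : ∑ i, ∑ j, (b i j)^2 = 1 := by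
    have : ∑ i, ∑ j, (b i j)^2 = (∑ i, ∑ j, ((Y * Yᵀ) i j)^2) / cY^2 := by
      simp only [hb, div_pow, Finset.sum_div]
    rw [this, ← frob_sq, ← hcYdef, div_self (by positivity)]
  have hSXY : ∑ i, ∑ j, a i j * b i j = S X Y := by
    have h1 : ∑ i, ∑ j, a i j * b i j
        = (∑ i, ∑ j, (X * Xᵀ) i j * (Y * Yᵀ) i j) / (cX * cY) := by
      simp only [ha, hb, div_mul_div_comm, Finset.sum_div]
    rw [h1, key_swap X Y, ← frob_sq]
    simp only [S, frob_gram_comm X, frob_gram_comm Y, ← hcXdef, ← hcYdef]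
  set d : Fin N → Fin N → ℝ := fun i j => a i j - b i j with hd
  have hsum : ∑ i, ∑ j, (d i j)^2 = 2 - 2 * S X Y := by
    have : ∀ i j, (d i j)^2 = (a i j)^2 - 2 * (a i j * b i j) + (b i j)^2 := by
      intro i j; simp only [hd]; ring
    simp only [this, Finset.sum_add_distrib, Finset.sum_sub_distrib, ← Finset.mul_sum]
    rw [hSX, hSY, hSXY]; ring
  have hS0 : 0 ≤ S X Y := by
    apply div_nonneg (sq_nonneg _)
    exact mul_nonneg (frob_nonneg _) (frob_nonneg _)
  have hJ : (∑ i, ∑ j, d i j)^2 ≤ (N:ℝ)^2 * ∑ i, ∑ j, (d i j)^2 := by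
    calc (∑ i, ∑ j, d i j)^2
        ≤ (Finset.univ : Finset (Fin N)).card * ∑ i, (∑ j, d i j)^2 :=
          sq_sum_le_card_mul_sum_sq
      _ ≤ (N:ℝ) * ((N:ℝ) * ∑ i, ∑ j, (d i j)^2) := by
          rw [Finset.card_univ, Fintype.card_fin]
          apply mul_le_mul_of_nonneg_left _ (Nat.cast_nonneg N)
          rw [Finset.mul_sum]
          apply Finset.sum_le_sum
          intro i _
          have := sq_sum_le_card_mul_sum_sq (s := (Finset.univ : Finset (Fin N)))
            (f := fun j => d i j)
          simpa using this
      _ = (N:ℝ)^2 * ∑ i, ∑ j, (d i j)^2 := by ring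
  have hMMD' : MMD2 = ((∑ i, ∑ j, d i j) / (N:ℝ)^2)^2 := by
    rw [hMMD]
    congr 1
    simp only [hax, hay, hd, Finset.sum_sub_distrib]
    field_simp
  have hkey : (N:ℝ)^2 * MMD2 ≤ 2 - S X Y := by
    have h1 : (N:ℝ)^2 * MMD2 = (∑ i, ∑ j, d i j)^2 / (N:ℝ)^2 := by
      rw [hMMD', div_pow]; field_simp
    rw [h1]
    have h2 : (∑ i, ∑ j, d i j)^2 / (N:ℝ)^2 ≤ ∑ i, ∑ j, (d i j)^2 := by
      rw [div_le_iff₀ hN2]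
      linarith [hJ]
    calc (∑ i, ∑ j, d i j)^2 / (N:ℝ)^2 ≤ ∑ i, ∑ j, (d i j)^2 := h2
      _ = 2 - 2 * S X Y := hsum
      _ ≤ 2 - S X Y := by linarith
  constructor
  · linarith
  · rw [le_div_iff₀ hN2]; linarith
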